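/- Let G be a locally compact, Hausdorff, étale groupoid and let E: C*_r(G) → C₀(G⁰) be the conditional expectation extending restriction of functions to the unit space. Then E is faithful: for every b ∈ C*_r(G), if E(b*b) = 0 then b = 0. -/

import Mathlib

open scoped BigOperators CompactlySupported ZeroAtInfty
open Filter Topology
open scoped Classical

universe u

/-- A topological groupoid, described by its space of arrows `Γ`, with source `s`,
range `r`, inversion `inv` and a (total, junk-valued off the composable set)
composition `mul`.  All algebraic axioms are only imposed on composable pairs. -/
structure TopGroupoid (Γ : Type u) [TopologicalSpace Γ] where
  s : Γ → Γ
  r : Γ → Γ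
  inv : Γ → Γ
  mul : Γ → Γ → Γ
  s_s : ∀ g, s (s g) = s g
  r_s : ∀ g, r (s g) = s g
  s_r : ∀ g, s (r g) = r g
  r_r : ∀ g, r (r g) = r g
  s_mul : ∀ g h, s g = r h → s (mul g h) = s h
  r_mul : ∀ g h, s g = r h → r (mul g h) = r g
  mul_assoc' : ∀ g h k, s g = r h → s h = r k → mul (mul g h) k = mul g (mul h k)
  unit_mul : ∀ g, mul (r g) g = g
  mul_unit : ∀ g, mul g (s g) = g
  s_inv : ∀ g, s (inv g) = r g
  r_inv : ∀ g, r (inv g) = s g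
  inv_inv : ∀ g, inv (inv g) = g
  inv_mul : ∀ g, mul (inv g) g = s g
  mul_inv : ∀ g, mul g (inv g) = r g
  continuous_inv : Continuous inv
  continuousOn_mul : ContinuousOn (fun p : Γ × Γ => mul p.1 p.2) {p : Γ × Γ | s p.1 = r p.2}

namespace TopGroupoid

variable {Γ : Type u} [TopologicalSpace Γ] (G : TopGroupoid Γ)

/-- The unit space `G⁰` of the groupoid, i.e. the set of units. -/
def unitSpace : Set Γ := Set.range G.s

/-- A groupoid is étale when its source map is a local homeomorphism. -/
def IsEtale : Prop := IsLocalHomeomorph G.s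

/-- Topologically principal: the units with trivial isotropy are dense in the unit space. -/
def TopPrincipal : Prop :=
  G.unitSpace ⊆ closure {u | u ∈ G.unitSpace ∧ ∀ g, G.r g = u → G.s g = u → g = u}

/-- Minimal: every orbit is dense in the unit space. -/
def Minimal : Prop :=
  ∀ u ∈ G.unitSpace, G.unitSpace ⊆ closure {v | ∃ g, G.s g = u ∧ G.r g = v}

/-- A set of units is invariant when it is closed under taking ranges of arrows
whose source lies in the set. -/
def Invariant (D : Set Γ) : Prop := ∀ g, G.s g ∈ D → G.r g ∈ D

/-- A bisection: both the source and the range map are injective on it. -/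
def IsBisection (B : Set Γ) : Prop := B.InjOn G.s ∧ B.InjOn G.r

/-- An ample groupoid: there is a basis of compact open bisections. -/
def Ample : Prop :=
  ∀ g : Γ, ∀ V : Set Γ, g ∈ V → IsOpen V →
    ∃ B : Set Γ, IsCompact B ∧ IsOpen B ∧ G.IsBisection B ∧ g ∈ B ∧ B ⊆ V

/-- The convolution product of two functions on the groupoid. -/
noncomputable def conv (f g : Γ → ℂ) : Γ → ℂ :=
  fun γ => ∑ᶠ η ∈ {η : Γ | G.r η = G.r γ}, f η * g (G.mul (G.inv η) γ)

/-- The involution `f*(γ) = conj (f (γ⁻¹))`. -/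
noncomputable def starFun (f : Γ → ℂ) : Γ → ℂ :=
  fun γ => (starRingEnd ℂ) (f (G.inv γ))

/-- The fibre `Gu = s⁻¹(u)` over a unit `u`. -/
def fiber (u : Γ) : Set Γ := {γ : Γ | G.s γ = u}

/-- The `I`-norm of a function on the groupoid. -/
noncomputable def normI (f : Γ → ℂ) : ℝ :=
  ⨆ u : G.unitSpace,
    max (∑ᶠ γ ∈ G.fiber (u : Γ), ‖f γ‖) (∑ᶠ γ ∈ {γ : Γ | G.r γ = (u : Γ)}, ‖f γ‖)

/-- The point mass `δ_γ ∈ ℓ²(Gu)`. -/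
noncomputable def delta (u : Γ) (γ : ↥(G.fiber u)) : lp (fun _ : ↥(G.fiber u) => ℂ) 2 :=
  letI := Classical.decEq ↥(G.fiber u)
  lp.single 2 γ 1

end TopGroupoid

/-- The reduced groupoid `C*`-algebra of a topological groupoid `G`:
a C*-algebra `A` together with a linear map `j` from `C_c(G)` with dense range which is
multiplicative for convolution and `*`-preserving, together with, for each unit `u`, the
regular representation `π_u` on `ℓ²(Gu)` (specified by its matrix coefficients
`π_u(f) δ_γ = Σ_{s(η)=r(γ)} f(η) δ_{ηγ}`), such that the norm on `A` is the supremum of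
the norms in the regular representations. -/
structure ReducedCStarAlg {Γ : Type u} [TopologicalSpace Γ] (G : TopGroupoid Γ) where
  A : Type u
  [nonUnitalNormedRing : NonUnitalNormedRing A]
  [starRing : StarRing A]
  [cstarRing : CStarRing A]
  [normedSpace : NormedSpace ℂ A]
  [isScalarTower : IsScalarTower ℂ A A]
  [smulCommClass : SMulCommClass ℂ A A]
  [starModule : StarModule ℂ A]
  [completeSpace : CompleteSpace A]
  j : C_c(Γ, ℂ) →ₗ[ℂ] A
  dense_range : DenseRange ⇑j
  j_mul : ∀ f g h : C_c(Γ, ℂ), ⇑h = G.conv ⇑f ⇑g → j f * j g = j h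
  j_star : ∀ f h : C_c(Γ, ℂ), ⇑h = G.starFun ⇑f → star (j f) = j h
  π : ∀ u : Γ, C_c(Γ, ℂ) →
      (lp (fun _ : ↥(G.fiber u) => ℂ) 2 →L[ℂ] lp (fun _ : ↥(G.fiber u) => ℂ) 2)
  π_apply : ∀ (u : Γ) (f : C_c(Γ, ℂ)) (γ ξ : ↥(G.fiber u)),
      (π u f (G.delta u γ)) ξ = f (G.mul (ξ : Γ) (G.inv (γ : Γ)))
  norm_j : ∀ f : C_c(Γ, ℂ), ‖j f‖ = ⨆ u : G.unitSpace, ‖π (u : Γ) f‖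

attribute [instance] ReducedCStarAlg.nonUnitalNormedRing ReducedCStarAlg.starRing
  ReducedCStarAlg.cstarRing ReducedCStarAlg.normedSpace ReducedCStarAlg.isScalarTower
  ReducedCStarAlg.smulCommClass ReducedCStarAlg.starModule ReducedCStarAlg.completeSpace

namespace ReducedCStarAlg

variable {Γ : Type u} [TopologicalSpace Γ] {G : TopGroupoid Γ}

/-- The copy of `C₀(G⁰)` inside the reduced groupoid `C*`-algebra: the closure of the image
of the compactly supported continuous functions supported in the unit space. -/
def unitAlgebra (S : ReducedCStarAlg G) : Set S.A :=
  closure (⇑S.j '' {f : C_c(Γ, ℂ) | Function.support ⇑f ⊆ G.unitSpace})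

end ReducedCStarAlg

/-- Positivity in a `*`-algebra: `a = b* b` for some `b`. -/
def IsPositiveElem {A : Type*} [Mul A] [Star A] (a : A) : Prop := ∃ b : A, a = star b * b

/-- The conditional expectation `E : C*_r(G) → C₀(G⁰) ⊆ C*_r(G)` extending the restriction
map `C_c(G) → C_c(G⁰)`: it is characterised among contractive linear maps by the property
that it sends (the image in `C*_r(G)` of) `f ∈ C_c(G)` to (the image of) `f|_{G⁰}`. -/
def IsRestrictionExpectation {Γ : Type u} [TopologicalSpace Γ] {G : TopGroupoid Γ}
    (S : ReducedCStarAlg G) (E : S.A →L[ℂ] S.A) : Prop :=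
  ‖E‖ ≤ 1 ∧
    ∀ f f₀ : C_c(Γ, ℂ), (∀ γ : Γ, f₀ γ = if γ ∈ G.unitSpace then f γ else 0) →
      E (S.j f) = S.j f₀

/-! ### Auxiliary development for the faithfulness theorem -/

section AuxDev

open Set Function
open scoped ENNReal NNReal

namespace TopGroupoid

variable {Γ : Type u} [TopologicalSpace Γ] (G : TopGroupoid Γ)

lemma r_unit {u : Γ} (hu : G.s u = u) : G.r u = u := by
  have h := G.r_s u
  rw [hu] at h
  exact h

lemma inv_unit {u : Γ} (hu : G.s u = u) : G.inv u = u := by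
  have h1 : G.mul (G.inv u) u = u := by rw [G.inv_mul, hu]
  have h2 : G.s (G.inv u) = u := by rw [G.s_inv, G.r_unit hu]
  have h3 := G.mul_unit (G.inv u)
  rw [h2] at h3
  rw [← h3, h1]

lemma mul_inv_unit {g u : Γ} (hg : G.s g = u) (hu : G.s u = u) : G.mul g (G.inv u) = g := by
  rw [G.inv_unit hu, ← hg, G.mul_unit]

lemma inv_mul_mul {h k : Γ} (hc : G.s h = G.r k) : G.mul (G.inv h) (G.mul h k) = k := by
  rw [← G.mul_assoc' (G.inv h) h k (by rw [G.s_inv]) hc, G.inv_mul, hc, G.unit_mul]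

lemma mul_inv_mul {h k : Γ} (hc : G.r h = G.r k) : G.mul h (G.mul (G.inv h) k) = k := by
  rw [← G.mul_assoc' h (G.inv h) k (by rw [G.r_inv]) (by rw [G.s_inv, hc]), G.mul_inv, hc,
    G.unit_mul]

lemma mul_inv_cancel_right {ξ γ : Γ} (hc : G.s ξ = G.s γ) :
    G.mul (G.mul ξ (G.inv γ)) γ = ξ := by
  rw [G.mul_assoc' ξ (G.inv γ) γ (by rw [G.r_inv, hc]) (by rw [G.s_inv]), G.inv_mul, ← hc,
    G.mul_unit]

lemma recover_of_mul_inv {ξ γ : Γ} (hc : G.s ξ = G.s γ) :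
    G.mul (G.inv (G.mul ξ (G.inv γ))) ξ = γ := by
  have h1 : G.mul (G.mul ξ (G.inv γ)) γ = ξ := G.mul_inv_cancel_right hc
  have h2 : G.s (G.mul ξ (G.inv γ)) = G.r γ := by
    rw [G.s_mul _ _ (by rw [G.r_inv, hc]), G.s_inv]
  have h3 := G.inv_mul_mul (h := G.mul ξ (G.inv γ)) (k := γ) h2
  rwa [h1] at h3

/-- The inversion as a homeomorphism. -/
def invHomeo : Γ ≃ₜ Γ where
  toFun := G.inv
  invFun := G.inv
  left_inv := G.inv_inv
  right_inv := G.inv_inv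
  continuous_toFun := G.continuous_inv
  continuous_invFun := G.continuous_inv

@[simp] lemma invHomeo_apply (x : Γ) : G.invHomeo x = G.inv x := rfl

variable {G}

lemma IsEtale.continuous_s (hG : G.IsEtale) : Continuous G.s := hG.continuous

lemma IsEtale.continuous_r (hG : G.IsEtale) : Continuous G.r := by
  have h : Continuous (G.s ∘ G.inv) := hG.continuous.comp G.continuous_inv
  exact h.congr fun x => G.s_inv x

lemma IsEtale.isLocalHomeomorph_r (hG : G.IsEtale) : IsLocalHomeomorph G.r := by
  have h := IsLocalHomeomorph.comp hG G.invHomeo.isLocalHomeomorph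
  have he : G.s ∘ (G.invHomeo : Γ → Γ) = G.r := funext fun x => G.s_inv x
  rwa [he] at h

lemma mem_unitSpace {u : Γ} : u ∈ G.unitSpace ↔ G.s u = u := by
  constructor
  · rintro ⟨g, rfl⟩; exact G.s_s g
  · intro h; exact ⟨u, h⟩

lemma IsEtale.isClosed_unitSpace [T2Space Γ] (hG : G.IsEtale) : IsClosed G.unitSpace := by
  have h : G.unitSpace = {x | G.s x = x} := Set.ext fun x => mem_unitSpace
  rw [h]
  exact isClosed_eq hG.continuous continuous_id

lemma IsEtale.isOpen_unitSpace (hG : G.IsEtale) : IsOpen G.unitSpace := by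
  rw [isOpen_iff_forall_mem_open]
  intro u hu
  obtain ⟨e, hsrc, hse⟩ := hG u
  refine ⟨e.target, ?_, e.open_target, ?_⟩
  · intro y hy
    exact ⟨e.symm y, by rw [hse]; exact e.right_inv hy⟩
  · have h1 : G.s u = u := mem_unitSpace.mp hu
    have h2 : u = e u := by conv_lhs => rw [← h1, hse]
    rw [h2]
    exact e.map_source hsrc

lemma IsEtale.finite_fiber_inter (hG : G.IsEtale) {K : Set Γ} (hK : IsCompact K) (x : Γ) :
    ({γ | G.s γ = x} ∩ K).Finite := by
  choose E hEmem hEs using fun γ : Γ => hG γ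
  obtain ⟨t, -, hcov⟩ := hK.elim_nhds_subcover (fun γ => (E γ).source)
    (fun γ _ => (E γ).open_source.mem_nhds (hEmem γ))
  have hsub : {γ | G.s γ = x} ∩ K ⊆ ⋃ γ ∈ t, ({η | G.s η = x} ∩ (E γ).source) := by
    rintro y ⟨hy, hyK⟩
    obtain ⟨γ, hγt, hγU⟩ := Set.mem_iUnion₂.mp (hcov hyK)
    exact Set.mem_biUnion hγt ⟨hy, hγU⟩
  refine Set.Finite.subset (Set.Finite.biUnion t.finite_toSet fun γ _ => ?_) hsub
  apply Set.Subsingleton.finite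
  rintro a ⟨ha, haS⟩ b ⟨hb, hbS⟩
  refine (E γ).injOn haS hbS ?_
  rw [← hEs γ]
  rw [Set.mem_setOf_eq] at ha hb
  rw [ha, hb]

lemma IsEtale.exists_partition [T2Space Γ] [LocallyCompactSpace Γ] (hG : G.IsEtale)
    (f : C_c(Γ, ℂ)) :
    ∃ (n : ℕ) (eS eR : Fin n → OpenPartialHomeomorph Γ Γ) (F : Fin n → C_c(Γ, ℂ)),
      (∀ i, G.s = ⇑(eS i)) ∧ (∀ i, G.r = ⇑(eR i)) ∧
      (∀ i, tsupport ⇑(F i) ⊆ (eS i).source ∩ (eR i).source) ∧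
      (∀ x, f x = ∑ i, F i x) := by
  classical
  choose E1 hE1 hsE1 using fun γ : Γ => hG γ
  choose E2 hE2 hsE2 using fun γ : Γ => hG.isLocalHomeomorph_r γ
  set U : Γ → Set Γ := fun γ => (E1 γ).source ∩ (E2 γ).source with hU
  have hUopen : ∀ γ, IsOpen (U γ) := fun γ => (E1 γ).open_source.inter (E2 γ).open_source
  have hUmem : ∀ γ, γ ∈ U γ := fun γ => ⟨hE1 γ, hE2 γ⟩
  obtain ⟨t, -, hcov⟩ := f.hasCompactSupport.elim_nhds_subcover U
    (fun γ _ => (hUopen γ).mem_nhds (hUmem γ))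
  set l := t.toList with hl
  set n := l.length with hn
  have hcov' : tsupport ⇑f ⊆ ⋃ i : Fin n, U (l.get i) := by
    intro x hx
    obtain ⟨γ, hγt, hγU⟩ := Set.mem_iUnion₂.mp (hcov hx)
    obtain ⟨i, hi⟩ := List.mem_iff_get.mp (Finset.mem_toList.mpr hγt)
    exact Set.mem_iUnion.mpr ⟨i, by rw [hi]; exact hγU⟩
  obtain ⟨χ, hχsupp, hχsum, hχmem, hχcs⟩ :=
    exists_continuous_sum_one_of_isOpen_isCompact (fun i : Fin n => hUopen (l.get i))
      f.hasCompactSupport.isCompact hcov'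
  refine ⟨n, fun i => E1 (l.get i), fun i => E2 (l.get i),
    fun i => ⟨⟨fun x => χ i x • f x, (χ i).continuous.smul f.continuous⟩,
      f.hasCompactSupport.smul_left (f := fun x => χ i x)⟩, fun i => hsE1 _, fun i => hsE2 _, ?_, ?_⟩
  · intro i
    refine subset_trans (closure_mono ?_) (hχsupp i)
    intro x hx
    simp only [Function.mem_support, CompactlySupportedContinuousMap.coe_mk,
      ContinuousMap.coe_mk] at hx ⊢
    intro h0
    exact hx (by rw [h0, zero_smul])
  · intro x
    by_cases hx : x ∈ tsupport ⇑f
    · have h1 := hχsum hx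
      simp only [Finset.sum_apply, Pi.one_apply] at h1
      simp only [CompactlySupportedContinuousMap.coe_sum, Finset.sum_apply,
        CompactlySupportedContinuousMap.coe_mk, ContinuousMap.coe_mk]
      rw [← Finset.sum_smul, h1, one_smul]
    · have h0 : f x = 0 := image_eq_zero_of_notMem_tsupport hx
      simp only [CompactlySupportedContinuousMap.coe_sum, Finset.sum_apply,
        CompactlySupportedContinuousMap.coe_mk, ContinuousMap.coe_mk, h0, smul_zero,
        Finset.sum_const_zero]

variable (G)

/-- The star of a compactly supported function, as a compactly supported function. -/
noncomputable def starCc (f : C_c(Γ, ℂ)) : C_c(Γ, ℂ) where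
  toFun := fun γ => (starRingEnd ℂ) (f (G.inv γ))
  continuous_toFun := Complex.continuous_conj.comp (f.continuous.comp G.continuous_inv)
  hasCompactSupport' := by
    have h1 : HasCompactSupport (⇑f ∘ G.inv) := by
      have := f.hasCompactSupport.comp_homeomorph G.invHomeo
      exact this
    exact h1.comp_left (g := fun z => (starRingEnd ℂ) z) (map_zero _)

@[simp] lemma starCc_apply (f : C_c(Γ, ℂ)) (γ : Γ) :
    G.starCc f γ = (starRingEnd ℂ) (f (G.inv γ)) := rfl

lemma starCc_coe (f : C_c(Γ, ℂ)) : ⇑(G.starCc f) = G.starFun ⇑f := rfl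

end TopGroupoid

/-- Auxiliary: pulling a finite sum out of a `finsum` over a set. -/
lemma finsum_mem_finset_sum' {α : Type*} {ι : Type*} {M : Type*} [AddCommMonoid M]
    (t : Finset ι) (S : Set α) (F : ι → α → M)
    (h : ∀ i ∈ t, (S ∩ Function.support (F i)).Finite) :
    (∑ᶠ a ∈ S, ∑ i ∈ t, F i a) = ∑ i ∈ t, ∑ᶠ a ∈ S, F i a := by
  classical
  induction t using Finset.induction_on with
  | empty => simp
  | insert i t hit ih =>
    have h1 : (∑ᶠ a ∈ S, ∑ j ∈ insert i t, F j a) = ∑ᶠ a ∈ S, (F i a + ∑ j ∈ t, F j a) :=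
      finsum_mem_congr rfl (fun a _ => Finset.sum_insert hit)
    have hfin2 : (S ∩ Function.support fun a => ∑ j ∈ t, F j a).Finite := by
      refine Set.Finite.subset
        (Set.Finite.biUnion t.finite_toSet fun j hj => h j (Finset.mem_insert_of_mem hj)) ?_
      rintro a ⟨haS, ha⟩
      rw [Function.mem_support] at ha
      obtain ⟨j, hjt, hja⟩ := Finset.exists_ne_zero_of_sum_ne_zero ha
      exact Set.mem_biUnion hjt ⟨haS, hja⟩
    rw [h1, finsum_mem_add_distrib' (h i (Finset.mem_insert_self i t)) hfin2,
      Finset.sum_insert hit, ih fun j hj => h j (Finset.mem_insert_of_mem hj)]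

namespace TopGroupoid

variable {Γ : Type u} [TopologicalSpace Γ] (G : TopGroupoid Γ)

/-- Convolution with a left factor supported in an open "bisection" (here: the source of a
partial homeomorphism implementing `r`) yields a compactly supported continuous function. -/
lemma exists_conv [T2Space Γ] (hs : Continuous G.s) (hr : Continuous G.r)
    (gc f : C_c(Γ, ℂ)) (e : OpenPartialHomeomorph Γ Γ) (he : ⇑e = G.r)
    (hsupp : tsupport ⇑gc ⊆ e.source) :
    ∃ h : C_c(Γ, ℂ), ⇑h = G.conv ⇑gc ⇑f := by
  classical
  set φ : Γ → ℂ := fun γ =>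
    if G.r γ ∈ e.target then
      gc (e.symm (G.r γ)) * f (G.mul (G.inv (e.symm (G.r γ))) γ)
    else 0 with hφ
  have hkey : ∀ γ η : Γ, G.r η = G.r γ → gc η ≠ 0 →
      G.r γ ∈ e.target ∧ e.symm (G.r γ) = η := by
    intro γ η hη hgc
    have hη_src : η ∈ e.source := hsupp (subset_tsupport _ hgc)
    have h1 : e η = G.r γ := by rw [he]; exact hη
    constructor
    · rw [← h1]; exact e.map_source hη_src
    · rw [← h1, e.left_inv hη_src]
  have hη₀r : ∀ γ : Γ, G.r γ ∈ e.target → G.r (e.symm (G.r γ)) = G.r γ := by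
    intro γ hm
    have h1 : G.r (e.symm (G.r γ)) = e (e.symm (G.r γ)) := by rw [he]
    rw [h1, e.right_inv hm]
  -- pointwise identity with the convolution
  have hpt : ∀ γ, φ γ = G.conv ⇑gc ⇑f γ := by
    intro γ
    show φ γ = ∑ᶠ η ∈ {η | G.r η = G.r γ}, gc η * f (G.mul (G.inv η) γ)
    by_cases hm : G.r γ ∈ e.target
    · set η₀ := e.symm (G.r γ) with hη₀
      have hmem : η₀ ∈ {η | G.r η = G.r γ} := hη₀r γ hm
      rw [finsum_mem_def, finsum_eq_single _ η₀ ?_, Set.indicator_of_mem hmem]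
      · rw [hφ]
        simp only [if_pos hm]
        rfl
      · intro x hx
        by_cases hxS : x ∈ {η | G.r η = G.r γ}
        · rw [Set.indicator_of_mem hxS]
          by_contra hne
          have hgc0 : gc x ≠ 0 := fun h0 => hne (by rw [h0, zero_mul])
          exact hx ((hkey γ x hxS hgc0).2.symm)
        · exact Set.indicator_of_notMem hxS _
    · have hz : Set.EqOn (fun η => gc η * f (G.mul (G.inv η) γ)) 0 {η | G.r η = G.r γ} := by
        intro x hxS
        rcases eq_or_ne (gc x) 0 with h0 | h0
        · show gc x * _ = 0
          rw [h0, zero_mul]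
        · exact absurd (hkey γ x hxS h0).1 hm
      rw [finsum_mem_of_eqOn_zero hz, hφ]
      simp only [if_neg hm]
  -- continuity
  have hcont : Continuous φ := by
    rw [continuous_iff_continuousAt]
    intro γ
    by_cases hK : G.r γ ∈ e '' tsupport ⇑gc
    · have hm : G.r γ ∈ e.target := by
        obtain ⟨x, hx, hex⟩ := hK
        rw [← hex]
        exact e.map_source (hsupp hx)
      have hO : IsOpen (G.r ⁻¹' e.target) := e.open_target.preimage hr
      have hq : ContinuousOn (fun x => e.symm (G.r x)) (G.r ⁻¹' e.target) :=
        e.continuousOn_symm.comp hr.continuousOn fun x hx => hx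
      have hmul : ContinuousOn (fun x => G.mul (G.inv (e.symm (G.r x))) x)
          (G.r ⁻¹' e.target) := by
        have hpair : ContinuousOn (fun x => ((G.inv (e.symm (G.r x)), x) : Γ × Γ))
            (G.r ⁻¹' e.target) :=
          (G.continuous_inv.comp_continuousOn hq).prodMk continuousOn_id
        refine G.continuousOn_mul.comp hpair fun x hx => ?_
        show G.s (G.inv (e.symm (G.r x))) = G.r x
        rw [G.s_inv, hη₀r x hx]
      have hψ : ContinuousOn
          (fun x => gc (e.symm (G.r x)) * f (G.mul (G.inv (e.symm (G.r x))) x))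
          (G.r ⁻¹' e.target) :=
        (gc.continuous.comp_continuousOn hq).mul (f.continuous.comp_continuousOn hmul)
      refine (hψ.continuousAt (hO.mem_nhds hm)).congr ?_
      filter_upwards [hO.mem_nhds hm] with x hx
      exact (if_pos hx).symm
    · have hKc : IsCompact (e '' tsupport ⇑gc) :=
        gc.hasCompactSupport.image_of_continuousOn (e.continuousOn.mono hsupp)
      have hO : IsOpen (G.r ⁻¹' (e '' tsupport ⇑gc)ᶜ) :=
        hKc.isClosed.isOpen_compl.preimage hr
      refine (continuousAt_const (y := (0 : ℂ))).congr ?_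
      filter_upwards [hO.mem_nhds hK] with x hx
      rw [hφ]
      by_cases hm : G.r x ∈ e.target
      · simp only [if_pos hm]
        rcases eq_or_ne (gc (e.symm (G.r x))) 0 with h0 | h0
        · rw [h0, zero_mul]
        · exact absurd ⟨e.symm (G.r x), subset_tsupport _ h0, e.right_inv hm⟩ hx
      · simp only [if_neg hm]
  -- compact support
  have hcs : HasCompactSupport φ := by
    set P : Set (Γ × Γ) := (tsupport ⇑gc ×ˢ tsupport ⇑f) ∩ {p | G.s p.1 = G.r p.2} with hP
    have hPc : IsCompact P :=
      (gc.hasCompactSupport.prod f.hasCompactSupport).inter_right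
        (isClosed_eq (hs.comp continuous_fst) (hr.comp continuous_snd))
    have hQc : IsCompact ((fun p : Γ × Γ => G.mul p.1 p.2) '' P) :=
      hPc.image_of_continuousOn (G.continuousOn_mul.mono fun p hp => hp.2)
    refine IsCompact.of_isClosed_subset hQc isClosed_closure
      (closure_minimal ?_ hQc.isClosed)
    intro x hx
    rw [Function.mem_support] at hx
    by_cases hm : G.r x ∈ e.target
    swap
    · exact absurd (by rw [hφ]; simp only [if_neg hm]) hx
    set η₀ := e.symm (G.r x) with hη₀def
    have hx' : gc η₀ ≠ 0 ∧ f (G.mul (G.inv η₀) x) ≠ 0 := by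
      rw [hφ] at hx
      simp only [if_pos hm] at hx
      exact mul_ne_zero_iff.mp hx
    have hrη₀ : G.r η₀ = G.r x := hη₀r x hm
    have hcomp : G.s (G.inv η₀) = G.r x := by rw [G.s_inv, hrη₀]
    refine ⟨(η₀, G.mul (G.inv η₀) x),
      ⟨⟨subset_tsupport _ hx'.1, subset_tsupport _ hx'.2⟩, ?_⟩, ?_⟩
    · show G.s η₀ = G.r (G.mul (G.inv η₀) x)
      rw [G.r_mul _ _ hcomp, G.r_inv]
    · exact G.mul_inv_mul hrη₀
  exact ⟨⟨⟨φ, hcont⟩, hcs⟩, funext hpt⟩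

/-- The key convolution: `f⋆ ∗ f` exists in `C_c`. -/
lemma exists_conv_star [T2Space Γ] [LocallyCompactSpace Γ] (hG : G.IsEtale) (f : C_c(Γ, ℂ)) :
    ∃ h : C_c(Γ, ℂ), ⇑h = G.conv (G.starFun ⇑f) ⇑f := by
  classical
  obtain ⟨n, eS, eR, F, hsE, hrE, hFsupp, hsum⟩ := hG.exists_partition f
  have hs : Continuous G.s := hG.continuous
  have hr : Continuous G.r := hG.continuous_r
  have hstar_supp : ∀ i, Function.support ⇑(G.starCc (F i)) ⊆ G.inv ⁻¹' tsupport ⇑(F i) := by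
    intro i x hx
    rw [Function.mem_support, starCc_apply] at hx
    have h0 : F i (G.inv x) ≠ 0 := fun h => hx (by rw [h, map_zero])
    exact subset_tsupport _ h0
  have hpiece : ∀ i, ∃ h : C_c(Γ, ℂ), ⇑h = G.conv ⇑(G.starCc (F i)) ⇑f := by
    intro i
    refine G.exists_conv hs hr (G.starCc (F i)) f
      (G.invHomeo.transOpenPartialHomeomorph (eS i)) ?_ ?_
    · funext x
      show eS i (G.inv x) = G.r x
      have h1 : G.s (G.inv x) = G.r x := G.s_inv x
      rw [← h1, hsE i]
    · have h2 : IsClosed (G.inv ⁻¹' tsupport ⇑(F i)) :=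
        (isClosed_tsupport _).preimage G.continuous_inv
      refine (closure_minimal (hstar_supp i) h2).trans ?_
      intro x hx
      show x ∈ (G.invHomeo.transOpenPartialHomeomorph (eS i)).source
      have hmem : G.inv x ∈ (eS i).source ∩ (eR i).source := hFsupp i hx
      exact hmem.1
  choose hseq hhseq using hpiece
  refine ⟨∑ i, hseq i, ?_⟩
  funext γ
  rw [CompactlySupportedContinuousMap.coe_sum, Finset.sum_apply]
  have hSfin : ∀ i ∈ (Finset.univ : Finset (Fin n)),
      ({η | G.r η = G.r γ} ∩ Function.support
        (fun η => (G.starCc (F i)) η * f (G.mul (G.inv η) γ))).Finite := by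
    intro i _
    apply Set.Subsingleton.finite
    rintro a ⟨haS, haSup⟩ b ⟨hbS, hbSup⟩
    rw [Function.mem_support] at haSup hbSup
    have ha0 : (G.starCc (F i)) a ≠ 0 := fun h => haSup (by rw [h, zero_mul])
    have hb0 : (G.starCc (F i)) b ≠ 0 := fun h => hbSup (by rw [h, zero_mul])
    have ha : G.inv a ∈ (eS i).source := (hFsupp i (hstar_supp i ha0)).1
    have hb : G.inv b ∈ (eS i).source := (hFsupp i (hstar_supp i hb0)).1
    have hinv : G.inv a = G.inv b := by
      refine (eS i).injOn ha hb ?_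
      rw [← hsE i]
      show G.s (G.inv a) = G.s (G.inv b)
      rw [G.s_inv, G.s_inv]
      rw [Set.mem_setOf_eq] at haS hbS
      rw [haS, hbS]
    calc a = G.inv (G.inv a) := (G.inv_inv a).symm
      _ = G.inv (G.inv b) := by rw [hinv]
      _ = b := G.inv_inv b
  calc ∑ i, hseq i γ
      = ∑ i, ∑ᶠ η ∈ {η | G.r η = G.r γ}, (G.starCc (F i)) η * f (G.mul (G.inv η) γ) := by
        refine Finset.sum_congr rfl fun i _ => ?_
        rw [congrFun (hhseq i) γ]
        rfl
    _ = ∑ᶠ η ∈ {η | G.r η = G.r γ}, ∑ i, (G.starCc (F i)) η * f (G.mul (G.inv η) γ) :=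
        (finsum_mem_finset_sum' _ _ _ hSfin).symm
    _ = G.conv (G.starFun ⇑f) ⇑f γ := by
        show _ = ∑ᶠ η ∈ {η | G.r η = G.r γ}, G.starFun ⇑f η * f (G.mul (G.inv η) γ)
        refine finsum_mem_congr rfl fun η _ => ?_
        rw [← Finset.sum_mul]
        congr 1
        show ∑ i, (starRingEnd ℂ) (F i (G.inv η)) = (starRingEnd ℂ) (f (G.inv η))
        rw [← map_sum, ← hsum (G.inv η)]

/-- At a unit, the convolution `f⋆ ∗ f` dominates `‖f g‖²` for any `g` in the fibre. -/
lemma conv_star_apply_le [T2Space Γ] [LocallyCompactSpace Γ] (hG : G.IsEtale)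
    (f : C_c(Γ, ℂ)) {u : Γ} (hu : G.s u = u) (g : Γ) (hg : G.s g = u) :
    ‖f g‖ ^ 2 ≤ ‖G.conv (G.starFun ⇑f) ⇑f u‖ := by
  classical
  have hru : G.r u = u := G.r_unit hu
  set Φ : Γ → ℂ := fun η => G.starFun (⇑f) η * f (G.mul (G.inv η) u) with hΦ
  have hsimp : ∀ η, G.r η = u → Φ η = (starRingEnd ℂ) (f (G.inv η)) * f (G.inv η) := by
    intro η hη
    have h2 : G.s (G.inv η) = u := by rw [G.s_inv, hη]
    have h1 : G.mul (G.inv η) u = G.inv η := by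
      have h3 := G.mul_unit (G.inv η)
      rw [h2] at h3
      exact h3
    rw [hΦ]
    show G.starFun (⇑f) η * f (G.mul (G.inv η) u) = _
    rw [h1]
    rfl
  have hfin : ({η | G.r η = G.r u} ∩ Function.support Φ).Finite := by
    have hsub : {η | G.r η = G.r u} ∩ Function.support Φ ⊆
        G.inv '' ({γ | G.s γ = u} ∩ tsupport ⇑f) := by
      rintro η ⟨hηS, hηsup⟩
      rw [Set.mem_setOf_eq, hru] at hηS
      have hf0 : f (G.inv η) ≠ 0 := by
        intro h0
        apply hηsup
        rw [hsimp η hηS, h0]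
        simp
      exact ⟨G.inv η, ⟨by rw [Set.mem_setOf_eq, G.s_inv, hηS], subset_tsupport _ hf0⟩,
        G.inv_inv η⟩
    exact ((hG.finite_fiber_inter f.hasCompactSupport u).image G.inv).subset hsub
  have heq : G.conv (G.starFun ⇑f) ⇑f u = ∑ η ∈ hfin.toFinset, Φ η := by
    show ∑ᶠ η ∈ {η | G.r η = G.r u}, Φ η = _
    exact finsum_mem_eq_sum Φ hfin
  set t := hfin.toFinset with ht
  have hmemt : ∀ η ∈ t, G.r η = u ∧ Φ η ≠ 0 := by
    intro η hη
    rw [ht, Set.Finite.mem_toFinset] at hη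
    obtain ⟨h1, h2⟩ := hη
    rw [Set.mem_setOf_eq, hru] at h1
    exact ⟨h1, h2⟩
  have hterm : ∀ η ∈ t, Φ η = ((‖f (G.inv η)‖ ^ 2 : ℝ) : ℂ) := by
    intro η hη
    rw [hsimp η (hmemt η hη).1, mul_comm, Complex.mul_conj]
    rw [Complex.normSq_eq_norm_sq]
  have hXval : G.conv (G.starFun ⇑f) ⇑f u = ((∑ η ∈ t, ‖f (G.inv η)‖ ^ 2 : ℝ) : ℂ) := by
    rw [heq, Finset.sum_congr rfl hterm, Complex.ofReal_sum]
  rw [hXval, Complex.norm_real, Real.norm_eq_abs,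
    abs_of_nonneg (Finset.sum_nonneg fun _ _ => sq_nonneg _)]
  rcases eq_or_ne (f g) 0 with h0 | h0
  · rw [h0]
    simpa using Finset.sum_nonneg (fun (η : Γ) _ => sq_nonneg ‖f (G.inv η)‖)
  · have hmem : G.inv g ∈ t := by
      rw [ht, Set.Finite.mem_toFinset]
      constructor
      · rw [Set.mem_setOf_eq, G.r_inv, hg, hru]
      · rw [Function.mem_support, hsimp _ (by rw [G.r_inv, hg]), G.inv_inv]
        exact mul_ne_zero (fun h => h0 (by simpa using h)) h0
    have hle := Finset.single_le_sum (f := fun η => ‖f (G.inv η)‖ ^ 2)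
      (fun _ _ => sq_nonneg _) hmem
    simp only [G.inv_inv] at hle
    exact hle

/-- The restriction of `f` to the unit space, as a compactly supported function. -/
lemma exists_restriction [T2Space Γ] (hG : G.IsEtale) (f : C_c(Γ, ℂ)) :
    ∃ f₀ : C_c(Γ, ℂ), (∀ γ, f₀ γ = if γ ∈ G.unitSpace then f γ else 0) := by
  classical
  have hop := hG.isOpen_unitSpace
  have hcl := hG.isClosed_unitSpace
  set φ : Γ → ℂ := fun γ => if γ ∈ G.unitSpace then f γ else 0 with hφ
  have hcont : Continuous φ := by
    rw [continuous_iff_continuousAt]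
    intro x
    by_cases hx : x ∈ G.unitSpace
    · refine (f.continuous.continuousAt).congr ?_
      filter_upwards [hop.mem_nhds hx] with y hy
      rw [hφ]
      simp only [if_pos hy]
      rfl
    · refine (continuousAt_const (y := (0 : ℂ))).congr ?_
      filter_upwards [hcl.isOpen_compl.mem_nhds hx] with y hy
      rw [hφ]
      simp only [if_neg hy]
  have hcs : HasCompactSupport φ := by
    refine f.hasCompactSupport.mono ?_
    intro x hx
    rw [Function.mem_support] at hx ⊢
    intro h0
    apply hx
    rw [hφ]
    simp only [h0, ite_self]
  exact ⟨⟨⟨φ, hcont⟩, hcs⟩, fun γ => rfl⟩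

end TopGroupoid

namespace ReducedCStarAlg

open TopGroupoid

variable {Γ : Type u} [TopologicalSpace Γ] {G : TopGroupoid Γ}

/-- Coordinate evaluation on `ℓ²(Gu)` as a continuous linear functional. -/
noncomputable def coord (G : TopGroupoid Γ) (u : Γ) (ξ : ↥(G.fiber u)) :
    lp (fun _ : ↥(G.fiber u) => ℂ) 2 →L[ℂ] ℂ :=
  LinearMap.mkContinuous
    { toFun := fun v => v ξ
      map_add' := fun v w => by simp [lp.coeFn_add]
      map_smul' := fun c v => by simp [lp.coeFn_smul] }
    1 (fun v => by
      rw [one_mul]; exact lp.norm_apply_le_norm (by norm_num : (2 : ℝ≥0∞) ≠ 0) v ξ)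

@[simp] lemma coord_apply (u : Γ) (ξ : ↥(G.fiber u)) (v : lp (fun _ : ↥(G.fiber u) => ℂ) 2) :
    coord G u ξ v = v ξ := rfl

lemma delta_eq_single (u : Γ) (γ : ↥(G.fiber u)) :
    G.delta u γ = lp.single 2 γ 1 := by
  unfold TopGroupoid.delta
  congr!

lemma norm_delta (u : Γ) (γ : ↥(G.fiber u)) : ‖G.delta u γ‖ = 1 := by
  rw [delta_eq_single]
  have h := lp.norm_single (p := 2) (E := fun _ : ↥(G.fiber u) => ℂ)
    (by norm_num : (0 : ℝ≥0∞) < 2) γ (1 : ℂ)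
  simpa using h

variable (S : ReducedCStarAlg G)

lemma pi_apply_coord (u : Γ) (f : C_c(Γ, ℂ)) (γ ξ : ↥(G.fiber u)) :
    ‖f (G.mul ↑ξ (G.inv ↑γ))‖ ≤ ‖S.π u f‖ := by
  have h1 := S.π_apply u f γ ξ
  calc ‖f (G.mul ↑ξ (G.inv ↑γ))‖ = ‖(S.π u f (G.delta u γ)) ξ‖ := by rw [h1]
    _ ≤ ‖S.π u f (G.delta u γ)‖ := lp.norm_apply_le_norm (by norm_num) _ ξ
    _ ≤ ‖S.π u f‖ * ‖G.delta u γ‖ := (S.π u f).le_opNorm _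
    _ = ‖S.π u f‖ := by rw [norm_delta, mul_one]

lemma ext_of_delta {u : Γ}
    {T T' : lp (fun _ : ↥(G.fiber u) => ℂ) 2 →L[ℂ] lp (fun _ : ↥(G.fiber u) => ℂ) 2}
    (h : ∀ γ, T (G.delta u γ) = T' (G.delta u γ)) : T = T' := by
  refine ContinuousLinearMap.ext fun v => ?_
  have hv := lp.hasSum_single (E := fun _ : ↥(G.fiber u) => ℂ)
    (by norm_num : (2 : ℝ≥0∞) ≠ ⊤) v
  have h1 : HasSum (fun γ => T (lp.single 2 γ (v γ))) (T v) := hv.mapL T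
  have h2 : HasSum (fun γ => T' (lp.single 2 γ (v γ))) (T' v) := hv.mapL T'
  have key : ∀ γ, T (lp.single 2 γ (v γ)) = T' (lp.single 2 γ (v γ)) := by
    intro γ
    have hsm : lp.single 2 γ (v γ) = (v γ) • G.delta u γ := by
      rw [delta_eq_single, ← lp.single_smul, smul_eq_mul, mul_one]
    rw [hsm, map_smul, map_smul, h γ]
  exact HasSum.unique (h1.congr_fun fun γ => (key γ).symm) h2

lemma pi_eq_zero_of_delta {u : Γ}
    {T : lp (fun _ : ↥(G.fiber u) => ℂ) 2 →L[ℂ] lp (fun _ : ↥(G.fiber u) => ℂ) 2}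
    (h : ∀ γ, T (G.delta u γ) = 0) : T = 0 :=
  ext_of_delta (fun γ => by rw [h γ, ContinuousLinearMap.zero_apply])

lemma pi_add (u : Γ) (f g : C_c(Γ, ℂ)) : S.π u (f + g) = S.π u f + S.π u g := by
  refine ext_of_delta (fun γ => ?_)
  apply lp.ext
  funext ξ
  have h1 := S.π_apply u (f + g) γ ξ
  have h2 := S.π_apply u f γ ξ
  have h3 := S.π_apply u g γ ξ
  show (S.π u (f + g) (G.delta u γ)) ξ = ((S.π u f + S.π u g) (G.delta u γ)) ξ
  rw [h1, ContinuousLinearMap.add_apply (S.π u f), lp.coeFn_add, Pi.add_apply, h2, h3]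
  simp

lemma pi_zero (u : Γ) : S.π u 0 = 0 := by
  refine pi_eq_zero_of_delta (fun γ => ?_)
  apply lp.ext
  funext ξ
  have h1 := S.π_apply u 0 γ ξ
  show (S.π u 0 (G.delta u γ)) ξ = ((0 : lp (fun _ : ↥(G.fiber u) => ℂ) 2 →L[ℂ]
    lp (fun _ : ↥(G.fiber u) => ℂ) 2) (G.delta u γ)) ξ
  rw [h1]
  simp

/-- `f ↦ S.π u f` as an additive monoid homomorphism. -/
noncomputable def piHom (u : Γ) : C_c(Γ, ℂ) →+
    (lp (fun _ : ↥(G.fiber u) => ℂ) 2 →L[ℂ] lp (fun _ : ↥(G.fiber u) => ℂ) 2) :=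
  AddMonoidHom.mk' (S.π u) (S.pi_add u)

lemma pi_sub (u : Γ) (f g : C_c(Γ, ℂ)) : S.π u (f - g) = S.π u f - S.π u g :=
  map_sub (S.piHom u) f g

lemma pi_sum (u : Γ) {n : ℕ} (F : Fin n → C_c(Γ, ℂ)) :
    S.π u (∑ i, F i) = ∑ i, S.π u (F i) :=
  map_sum (S.piHom u) F Finset.univ

lemma norm_pi_le_of_bisection (u : Γ) (f : C_c(Γ, ℂ)) {V : Set Γ}
    (hsV : Set.InjOn G.s V) (hrV : Set.InjOn G.r V)
    (hsupp : Function.support ⇑f ⊆ V) {C : ℝ} (hC : 0 ≤ C) (hfC : ∀ γ, ‖f γ‖ ≤ C) :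
    ‖S.π u f‖ ≤ C := by
  classical
  refine (S.π u f).opNorm_le_bound hC fun v => ?_
  set T := S.π u f with hT
  -- the coordinates of `T v`
  have hTv : ∀ ξ : ↥(G.fiber u),
      HasSum (fun γ : ↥(G.fiber u) => v γ * f (G.mul ↑ξ (G.inv ↑γ))) ((T v) ξ) := by
    intro ξ
    have hv := lp.hasSum_single (E := fun _ : ↥(G.fiber u) => ℂ)
      (by norm_num : (2 : ℝ≥0∞) ≠ ⊤) v
    have h1 : HasSum (fun γ => coord G u ξ (T (lp.single 2 γ (v γ)))) (coord G u ξ (T v)) :=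
      (hv.mapL T).mapL (coord G u ξ)
    refine h1.congr_fun fun γ => ?_
    have hsm : lp.single 2 γ (v γ) = (v γ) • G.delta u γ := by
      rw [delta_eq_single, ← lp.single_smul, smul_eq_mul, mul_one]
    rw [hsm, map_smul, map_smul]
    have h2 : coord G u ξ (T (G.delta u γ)) = f (G.mul ↑ξ (G.inv ↑γ)) := by
      rw [coord_apply, hT, S.π_apply]
    rw [smul_eq_mul, h2]
  -- only one `γ` can contribute in each coordinate
  have uniq : ∀ (ξ γ₁ γ₂ : ↥(G.fiber u)), f (G.mul ↑ξ (G.inv ↑γ₁)) ≠ 0 →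
      f (G.mul ↑ξ (G.inv ↑γ₂)) ≠ 0 → γ₁ = γ₂ := by
    intro ξ γ₁ γ₂ h1 h2
    have hm1 : G.mul ↑ξ (G.inv ↑γ₁) ∈ V := hsupp h1
    have hm2 : G.mul ↑ξ (G.inv ↑γ₂) ∈ V := hsupp h2
    have hr1 : ∀ γ : ↥(G.fiber u), G.r (G.mul ↑ξ (G.inv ↑γ)) = G.r ↑ξ := fun γ =>
      G.r_mul _ _ (by rw [G.r_inv, ξ.2, γ.2])
    have heq : G.mul ↑ξ (G.inv ↑γ₁) = G.mul ↑ξ (G.inv ↑γ₂) :=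
      hrV hm1 hm2 (by rw [hr1 γ₁, hr1 γ₂])
    have hrec1 := G.recover_of_mul_inv (ξ := (↑ξ : Γ)) (γ := ↑γ₁) (by rw [ξ.2, γ₁.2])
    have hrec2 := G.recover_of_mul_inv (ξ := (↑ξ : Γ)) (γ := ↑γ₂) (by rw [ξ.2, γ₂.2])
    apply Subtype.ext
    rw [← hrec1, ← hrec2, heq]
  set q : ℝ := (2 : ℝ≥0∞).toReal with hq
  have hq2 : q = 2 := by norm_num [hq]
  have hq0 : (0 : ℝ) < q := by rw [hq2]; norm_num
  set F : ↥(G.fiber u) → ℝ := fun ξ => ‖(T v) ξ‖ ^ q with hF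
  set Gg : ↥(G.fiber u) → ℝ := fun γ => C ^ q * ‖v γ‖ ^ q with hGg
  -- each element of the support of F chooses its γ
  have hchoice : ∀ ξ : ↥(Function.support F),
      ∃ γ : ↥(G.fiber u), f (G.mul ↑↑ξ (G.inv ↑γ)) ≠ 0 := by
    rintro ⟨ξ, hξ⟩
    by_contra hno
    push_neg at hno
    have h0 : (T v) ξ = 0 := by
      refine HasSum.unique ((hTv ξ).congr_fun fun γ => ?_) hasSum_zero
      exact (mul_eq_zero_of_right _ (hno γ)).symm
    refine hξ ?_
    rw [hF]
    simp only [h0, norm_zero]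
    exact Real.zero_rpow hq0.ne'
  choose gm hgm using hchoice
  have hinj : Function.Injective gm := by
    rintro ξ₁ ξ₂ hgmeq
    have h1 := hgm ξ₁
    have h2 := hgm ξ₂
    rw [hgmeq] at h1
    set γ := gm ξ₂ with hγdef
    have hm1 : G.mul ↑↑ξ₁ (G.inv ↑γ) ∈ V := hsupp h1
    have hm2 : G.mul ↑↑ξ₂ (G.inv ↑γ) ∈ V := hsupp h2
    have hscomp : ∀ x : Γ, G.s x = u → G.s (G.mul x (G.inv ↑γ)) = G.s (G.inv ↑γ) :=
      fun x hx => G.s_mul _ _ (by rw [G.r_inv, hx, γ.2])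
    have heq : G.mul ↑↑ξ₁ (G.inv ↑γ) = G.mul ↑↑ξ₂ (G.inv ↑γ) :=
      hsV hm1 hm2 (by rw [hscomp _ (↑ξ₁ : ↥(G.fiber u)).2, hscomp _ (↑ξ₂ : ↥(G.fiber u)).2])
    have hc1 := G.mul_inv_cancel_right (ξ := (↑↑ξ₁ : Γ)) (γ := ↑γ)
      (by rw [(↑ξ₁ : ↥(G.fiber u)).2, γ.2])
    have hc2 := G.mul_inv_cancel_right (ξ := (↑↑ξ₂ : Γ)) (γ := ↑γ)
      (by rw [(↑ξ₂ : ↥(G.fiber u)).2, γ.2])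
    apply Subtype.ext; apply Subtype.ext
    rw [← hc1, ← hc2, heq]
  have hle : ∀ ξ : ↥(Function.support F), F ↑ξ ≤ Gg (gm ξ) := by
    intro ξ
    have hval : (T v) ↑ξ = v (gm ξ) * f (G.mul ↑↑ξ (G.inv ↑(gm ξ))) := by
      refine (hTv ↑ξ).unique (hasSum_single (gm ξ) fun γ hγ => ?_)
      rcases eq_or_ne (f (G.mul ↑↑ξ (G.inv ↑γ))) 0 with h0 | h0
      · exact mul_eq_zero_of_right _ h0
      · exact absurd (uniq ↑ξ γ (gm ξ) h0 (hgm ξ)) hγ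
    show ‖(T v) ↑ξ‖ ^ q ≤ C ^ q * ‖v (gm ξ)‖ ^ q
    rw [hval]
    calc ‖v (gm ξ) * f (G.mul ↑↑ξ (G.inv ↑(gm ξ)))‖ ^ q
        = (‖v (gm ξ)‖ * ‖f (G.mul ↑↑ξ (G.inv ↑(gm ξ)))‖) ^ q := by rw [norm_mul]
      _ ≤ (‖v (gm ξ)‖ * C) ^ q := by
          refine Real.rpow_le_rpow (by positivity) ?_ hq0.le
          exact mul_le_mul_of_nonneg_left (hfC _) (norm_nonneg _)
      _ = C ^ q * ‖v (gm ξ)‖ ^ q := by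
          rw [Real.mul_rpow (norm_nonneg _) hC, mul_comm]
  have hFs : Summable F := (lp.hasSum_norm hq0 (T v)).summable
  have hGs : Summable Gg := ((lp.hasSum_norm hq0 v).summable).mul_left (C ^ q)
  have h1 : ∑' ξ : ↥(Function.support F), F ↑ξ = ∑' ξ, F ξ :=
    tsum_subtype_eq_of_support_subset subset_rfl
  have h2 : ∑' ξ : ↥(Function.support F), F ↑ξ ≤ ∑' γ, Gg γ := by
    refine (hFs.subtype _).tsum_le_tsum_of_inj gm hinj (fun c _ => ?_) hle hGs
    rw [hGg]
    positivity
  have h3 : ‖T v‖ ^ q = ∑' ξ, F ξ := lp.norm_rpow_eq_tsum hq0 (T v)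
  have h4 : ∑' γ, Gg γ = C ^ q * ‖v‖ ^ q := by
    rw [hGg, tsum_mul_left, ← lp.norm_rpow_eq_tsum hq0 v]
  have h5 : ‖T v‖ ^ q ≤ (C * ‖v‖) ^ q := by
    rw [h3, ← h1, Real.mul_rpow hC (norm_nonneg _), ← h4]
    exact h2
  by_contra hlt
  push_neg at hlt
  have h6 := Real.rpow_lt_rpow (by positivity) hlt hq0
  linarith

lemma exists_pi_bound [T2Space Γ] [LocallyCompactSpace Γ] (hG : G.IsEtale) (f : C_c(Γ, ℂ)) :
    ∃ M : ℝ, 0 ≤ M ∧ ∀ u : Γ, ‖S.π u f‖ ≤ M := by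
  obtain ⟨n, eS, eR, F, hsE, hrE, hFsupp, hsum⟩ := hG.exists_partition f
  have hCb : ∀ i : Fin n, ∃ C : ℝ, 0 ≤ C ∧ ∀ γ, ‖F i γ‖ ≤ C := by
    intro i
    rcases isEmpty_or_nonempty Γ with hΓ | hΓ
    · exact ⟨0, le_rfl, fun γ => isEmptyElim γ⟩
    · obtain ⟨x₀, hx₀⟩ := ((F i).continuous.norm).exists_forall_ge_of_hasCompactSupport
        ((F i).hasCompactSupport.comp_left (g := fun z : ℂ => ‖z‖) norm_zero)
      exact ⟨‖F i x₀‖, norm_nonneg _, hx₀⟩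
  choose C hC0 hCb using hCb
  refine ⟨∑ i, C i, Finset.sum_nonneg fun i _ => hC0 i, fun u => ?_⟩
  have hf : f = ∑ i, F i := by
    ext x
    rw [hsum x, CompactlySupportedContinuousMap.coe_sum, Finset.sum_apply]
  rw [hf, S.pi_sum]
  refine (norm_sum_le _ _).trans (Finset.sum_le_sum fun i _ => ?_)
  refine S.norm_pi_le_of_bisection u (F i) (V := (eS i).source ∩ (eR i).source)
    ?_ ?_ ?_ (hC0 i) (hCb i)
  · rw [hsE i]
    exact (eS i).injOn.mono Set.inter_subset_left
  · rw [hrE i]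
    exact (eR i).injOn.mono Set.inter_subset_right
  · exact (subset_tsupport _).trans (hFsupp i)

lemma norm_pi_le_norm_j [T2Space Γ] [LocallyCompactSpace Γ] (hG : G.IsEtale) (f : C_c(Γ, ℂ))
    {u : Γ} (hu : u ∈ G.unitSpace) : ‖S.π u f‖ ≤ ‖S.j f‖ := by
  rw [S.norm_j]
  obtain ⟨M, hM0, hM⟩ := S.exists_pi_bound hG f
  exact le_ciSup (f := fun w : ↥G.unitSpace => ‖S.π (↑w : Γ) f‖)
    ⟨M, by rintro x ⟨w, rfl⟩; exact hM ↑w⟩ ⟨u, hu⟩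

lemma norm_eval_le [T2Space Γ] [LocallyCompactSpace Γ] (hG : G.IsEtale) (f : C_c(Γ, ℂ))
    (g : Γ) : ‖f g‖ ≤ ‖S.j f‖ := by
  have hu : G.s (G.s g) = G.s g := G.s_s g
  have h := S.pi_apply_coord (G.s g) f ⟨G.s g, hu⟩ ⟨g, rfl⟩
  rw [G.mul_inv_unit rfl hu] at h
  exact h.trans (S.norm_pi_le_norm_j hG f ⟨g, rfl⟩)

lemma exists_eval_functional [T2Space Γ] [LocallyCompactSpace Γ] (hG : G.IsEtale) (g : Γ) :
    ∃ ε : S.A →L[ℂ] ℂ, ∀ f : C_c(Γ, ℂ), ε (S.j f) = f g := by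
  classical
  set φ : C_c(Γ, ℂ) →ₗ[ℂ] ℂ :=
    { toFun := fun f => f g
      map_add' := fun f₁ f₂ => rfl
      map_smul' := fun c f => rfl } with hφdef
  have hbound : ∀ f, ‖φ f‖ ≤ ‖S.j f‖ := fun f => S.norm_eval_le hG f g
  have hker : LinearMap.ker S.j ≤ LinearMap.ker φ := by
    intro f hf
    rw [LinearMap.mem_ker] at hf ⊢
    have h1 : ‖φ f‖ ≤ 0 := by simpa [hf] using hbound f
    exact norm_le_zero_iff.mp h1
  set ψ₀ := (LinearMap.ker S.j).liftQ φ hker with hψ₀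
  set eqv := S.j.quotKerEquivRange with heqv
  set ψ : LinearMap.range S.j →ₗ[ℂ] ℂ := ψ₀ ∘ₗ (eqv.symm : LinearMap.range S.j →ₗ[ℂ] _)
    with hψdef
  have hψ : ∀ f : C_c(Γ, ℂ), ψ ⟨S.j f, LinearMap.mem_range_self _ f⟩ = f g := by
    intro f
    have h1 : eqv (Submodule.Quotient.mk f) = ⟨S.j f, LinearMap.mem_range_self _ f⟩ := by
      apply Subtype.ext
      simp [heqv, LinearMap.quotKerEquivRange_apply_mk]
    have h2 : eqv.symm ⟨S.j f, LinearMap.mem_range_self _ f⟩ = Submodule.Quotient.mk f := by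
      rw [← h1, LinearEquiv.symm_apply_apply]
    simp only [hψdef, LinearMap.coe_comp, Function.comp_apply, LinearEquiv.coe_coe, h2, hψ₀,
      Submodule.liftQ_apply]
    rfl
  have hψb : ∀ x : LinearMap.range S.j, ‖ψ x‖ ≤ 1 * ‖(x : S.A)‖ := by
    rintro ⟨x, hx⟩
    obtain ⟨f, rfl⟩ := hx
    rw [one_mul]
    calc ‖ψ ⟨S.j f, LinearMap.mem_range_self _ f⟩‖ = ‖f g‖ := by rw [hψ]
      _ ≤ ‖S.j f‖ := hbound f
  set Ψ := LinearMap.mkContinuous ψ 1 hψb with hΨ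
  obtain ⟨ε, hext, _⟩ := exists_extension_norm_eq (LinearMap.range S.j) Ψ
  refine ⟨ε, fun f => ?_⟩
  rw [hext ⟨S.j f, LinearMap.mem_range_self _ f⟩]
  show Ψ _ = f g
  exact hψ f

end ReducedCStarAlg

end AuxDev

/-- For a locally compact Hausdorff étale groupoid `G`, the conditional
expectation `E : C*_r(G) → C₀(G⁰)` extending restriction is faithful: `E (b* b) = 0`
implies `b = 0`. -/
theorem conditional_expectation_faithful
    {Γ : Type u} [TopologicalSpace Γ] [T2Space Γ] [LocallyCompactSpace Γ]
    (G : TopGroupoid Γ) (hEtale : G.IsEtale) (S : ReducedCStarAlg G)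
    (E : S.A →L[ℂ] S.A) (hE : IsRestrictionExpectation S E) :
    ∀ b : S.A, E (star b * b) = 0 → b = 0 := by
  classical
  intro b hb
  -- the evaluation functionals on the reduced C*-algebra
  choose ε hε using fun g : Γ => S.exists_eval_functional hEtale g
  -- Step 1: the functionals at units kill `star b * b`.
  have hstep1 : ∀ u, u ∈ G.unitSpace → ε u (star b * b) = 0 := by
    intro u hu
    have hEε : (fun x => ε u (E x)) = fun x => ε u x := by
      refine Continuous.ext_on S.dense_range ((ε u).continuous.comp E.continuous)
        (ε u).continuous ?_
      rintro x ⟨f, rfl⟩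
      obtain ⟨f₀, hf₀⟩ := TopGroupoid.exists_restriction (G := G) hEtale f
      show ε u (E (S.j f)) = ε u (S.j f)
      rw [hE.2 f f₀ hf₀, hε _ f₀, hε _ f, hf₀ u]
      simp only [if_pos hu]
    have h1 := congrFun hEε (star b * b)
    rw [← h1, hb, map_zero]
  -- Step 2: all evaluation functionals kill `b`.
  have hstep2 : ∀ g : Γ, ε g b = 0 := by
    intro g
    set u := G.s g with hu
    have huu : G.s u = u := G.s_s g
    have hZclosed : IsClosed {x : S.A | ‖ε g x‖ ^ 2 ≤ ‖ε u (star x * x)‖} := by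
      refine isClosed_le ?_ ?_
      · exact (((ε g).continuous.norm).pow 2)
      · exact ((ε u).continuous.comp ((continuous_star.mul continuous_id))).norm
    have hsub : Set.range ⇑S.j ⊆ {x : S.A | ‖ε g x‖ ^ 2 ≤ ‖ε u (star x * x)‖} := by
      rintro x ⟨f, rfl⟩
      obtain ⟨h, hh⟩ := TopGroupoid.exists_conv_star (G := G) hEtale f
      have hstar : star (S.j f) = S.j (G.starCc f) := S.j_star f (G.starCc f) rfl
      have hmul : S.j (G.starCc f) * S.j f = S.j h := S.j_mul (G.starCc f) f h hh
      rw [Set.mem_setOf_eq, hε, hstar, hmul, hε]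
      rw [congrFun hh u]
      exact G.conv_star_apply_le hEtale f huu g hu.symm
    have hbmem : b ∈ {x : S.A | ‖ε g x‖ ^ 2 ≤ ‖ε u (star x * x)‖} := by
      have h1 : closure (Set.range ⇑S.j) ⊆ {x : S.A | ‖ε g x‖ ^ 2 ≤ ‖ε u (star x * x)‖} :=
        closure_minimal hsub hZclosed
      apply h1
      have h2 : closure (Set.range ⇑S.j) = Set.univ := S.dense_range.closure_range
      rw [h2]
      trivial
    have hval : ‖ε u (star b * b)‖ = 0 := by
      rw [hstep1 u ⟨g, hu.symm⟩, norm_zero]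
    have h3 : ‖ε g b‖ ^ 2 ≤ 0 := by
      rw [← hval]
      exact hbmem
    have h5 : ‖ε g b‖ ≤ 0 := by nlinarith [norm_nonneg (ε g b)]
    exact norm_eq_zero.mp (le_antisymm h5 (norm_nonneg _))
  -- Step 3: approximate `b` and conclude.
  have happrox : ∀ n : ℕ, ∃ f : C_c(Γ, ℂ), ‖S.j f - b‖ < 1 / (n + 1) := by
    intro n
    have h1 : (0 : ℝ) < 1 / (n + 1) := by positivity
    obtain ⟨a, ha⟩ := S.dense_range.exists_dist_lt b h1
    refine ⟨a, ?_⟩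
    rw [← dist_eq_norm, dist_comm]
    exact ha
  choose fs hfs using happrox
  have htend0 : Filter.Tendsto (fun n : ℕ => 1 / ((n : ℝ) + 1)) Filter.atTop (nhds 0) :=
    tendsto_one_div_add_atTop_nhds_zero_nat
  have hjconv : Filter.Tendsto (fun m => S.j (fs m)) Filter.atTop (nhds b) := by
    rw [tendsto_iff_norm_sub_tendsto_zero]
    exact squeeze_zero (fun m => norm_nonneg _) (fun m => (hfs m).le) htend0
  have hjfs : ∀ n : ℕ, ‖S.j (fs n)‖ ≤ 3 / (n + 1) := by
    intro n
    rw [S.norm_j]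
    refine Real.iSup_le (fun w => ?_) (by positivity)
    set u := (w : Γ) with hudef
    set A : ℕ → (lp (fun _ : ↥(G.fiber u) => ℂ) 2 →L[ℂ] lp (fun _ : ↥(G.fiber u) => ℂ) 2) :=
      fun m => S.π u (fs m) with hA
    have hAdiff : ∀ m k : ℕ, ‖A m - A k‖ ≤ 1 / (m + 1) + 1 / (k + 1) := by
      intro m k
      rw [hA]
      simp only
      rw [← S.pi_sub]
      refine (S.norm_pi_le_norm_j hEtale _ w.2).trans ?_
      rw [map_sub]
      have h2 : ‖S.j (fs m) - S.j (fs k)‖ ≤ ‖S.j (fs m) - b‖ + ‖S.j (fs k) - b‖ := by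
        have h3 := norm_sub_le (S.j (fs m) - b) (S.j (fs k) - b)
        rw [sub_sub_sub_cancel_right] at h3
        exact h3
      exact h2.trans (add_le_add (hfs m).le (hfs k).le)
    have hcauchy : CauchySeq A := by
      refine cauchySeq_of_le_tendsto_0 (fun N => 2 / (N + 1)) (fun m k N hm hk => ?_) ?_
      · rw [dist_eq_norm]
        refine (hAdiff m k).trans ?_
        have h1 : 1 / ((m : ℝ) + 1) ≤ 1 / ((N : ℝ) + 1) := by gcongr
        have h2 : 1 / ((k : ℝ) + 1) ≤ 1 / ((N : ℝ) + 1) := by gcongr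
        have h3 : (2 : ℝ) / (N + 1) = 1 / (N + 1) + 1 / (N + 1) := by ring
        linarith
      · have h4 := htend0.const_mul (2 : ℝ)
        simp only [mul_zero] at h4
        refine h4.congr fun N => ?_
        rw [mul_one_div]
    obtain ⟨T, hT⟩ := cauchySeq_tendsto_of_complete hcauchy
    have hT0 : T = 0 := by
      refine ReducedCStarAlg.pi_eq_zero_of_delta (fun γ => ?_)
      apply lp.ext
      funext ξ
      show (T (G.delta u γ)) ξ = (0 : lp (fun _ : ↥(G.fiber u) => ℂ) 2) ξ
      rw [lp.coeFn_zero, Pi.zero_apply]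
      have hlim1 : Filter.Tendsto (fun m => ((A m) (G.delta u γ)) ξ) Filter.atTop
          (nhds ((T (G.delta u γ)) ξ)) := by
        have h1 : Filter.Tendsto (fun m => (A m) (G.delta u γ)) Filter.atTop
            (nhds (T (G.delta u γ))) := by
          have hcont : Continuous (fun Op : (lp (fun _ : ↥(G.fiber u) => ℂ) 2 →L[ℂ]
              lp (fun _ : ↥(G.fiber u) => ℂ) 2) => Op (G.delta u γ)) := by
            exact (ContinuousLinearMap.apply ℂ _ (G.delta u γ)).continuous
          exact (hcont.tendsto T).comp hT
        exact ((ReducedCStarAlg.coord G u ξ).continuous.tendsto _).comp h1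
      have hlim2 : Filter.Tendsto (fun m => ((A m) (G.delta u γ)) ξ) Filter.atTop
          (nhds 0) := by
        have h2 : Filter.Tendsto (fun m => ε (G.mul ↑ξ (G.inv ↑γ)) (S.j (fs m)))
            Filter.atTop (nhds (ε (G.mul ↑ξ (G.inv ↑γ)) b)) :=
          ((ε _).continuous.tendsto b).comp hjconv
        rw [hstep2] at h2
        refine h2.congr fun m => ?_
        rw [hε, hA]
        simp only
        rw [S.π_apply]
      exact tendsto_nhds_unique hlim1 hlim2
    have hAn : ‖A n‖ ≤ 2 / (n + 1) := by
      have h1 : Filter.Tendsto (fun m => ‖A n - A m‖) Filter.atTop (nhds ‖A n - T‖) := by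
        have hc : Continuous (fun X : (lp (fun _ : ↥(G.fiber u) => ℂ) 2 →L[ℂ]
            lp (fun _ : ↥(G.fiber u) => ℂ) 2) => ‖A n - X‖) :=
          (continuous_const.sub continuous_id).norm
        exact (hc.tendsto T).comp hT
      have h2 : ∀ᶠ m in Filter.atTop, ‖A n - A m‖ ≤ 2 / (n + 1) := by
        filter_upwards [Filter.eventually_ge_atTop n] with m hm
        refine (hAdiff n m).trans ?_
        have h3 : 1 / ((m : ℝ) + 1) ≤ 1 / ((n : ℝ) + 1) := by gcongr
        have h4 : (2 : ℝ) / (n + 1) = 1 / (n + 1) + 1 / (n + 1) := by ring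
        linarith
      have h5 : ‖A n - T‖ ≤ 2 / (n + 1) := le_of_tendsto h1 h2
      calc ‖A n‖ = ‖A n - T‖ := by rw [hT0, sub_zero]
        _ ≤ 2 / (n + 1) := h5
    refine hAn.trans ((div_le_div_iff_of_pos_right (by positivity)).mpr (by norm_num))
  have hbn : ∀ n : ℕ, ‖b‖ ≤ 4 / (n + 1) := by
    intro n
    calc ‖b‖ = ‖(b - S.j (fs n)) + S.j (fs n)‖ := by rw [sub_add_cancel]
      _ ≤ ‖b - S.j (fs n)‖ + ‖S.j (fs n)‖ := norm_add_le _ _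
      _ ≤ 1 / (n + 1) + 3 / (n + 1) := by
          refine add_le_add ?_ (hjfs n)
          rw [norm_sub_rev]
          exact (hfs n).le
      _ = 4 / (n + 1) := by ring
  have htend4 : Filter.Tendsto (fun n : ℕ => 4 / ((n : ℝ) + 1)) Filter.atTop (nhds 0) := by
    have h4 := htend0.const_mul (4 : ℝ)
    simp only [mul_zero] at h4
    refine h4.congr fun N => ?_
    rw [mul_one_div]
  have hb0 : ‖b‖ ≤ 0 := ge_of_tendsto' htend4 hbn
  exact norm_le_zero_iff.mp hb0
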